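/- Let V₁, ..., V_n be exchangeable real random variables and V_{n+1} exchangeable with them (i.e., (V₁,...,V_{n+1}) is exchangeable). Let q̂ be the ⌈(n+1)(1−α)⌉-th smallest value among V₁, ..., V_n (for α ∈ (0,1) with ⌈(n+1)(1−α)⌉ ≤ n). Then Pr(V_{n+1} ≤ q̂) ≥ 1 − α. -/

import Mathlib

open MeasureTheory

open Finset in
lemma lemA {n k : ℕ} (hk1 : 1 ≤ k) (hkn : k ≤ n) (w : Fin n → ℝ) (t : ℝ) :
    t ≤ sInf {x : ℝ | k ≤ (Finset.univ.filter (fun i => w i ≤ x)).card} ↔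
      (Finset.univ.filter (fun i => w i < t)).card < k := by
  have hn : 0 < n := lt_of_lt_of_le hk1 hkn
  have hne : (Finset.univ : Finset (Fin n)).Nonempty := ⟨⟨0, hn⟩, Finset.mem_univ _⟩
  set S := {x : ℝ | k ≤ (Finset.univ.filter (fun i => w i ≤ x)).card} with hS
  have hSne : S.Nonempty := by
    refine ⟨Finset.univ.sup' hne w, ?_⟩
    have h1 : Finset.univ.filter (fun i => w i ≤ Finset.univ.sup' hne w) = Finset.univ := by
      apply Finset.filter_true_of_mem
      intro i _
      exact Finset.le_sup' w (Finset.mem_univ i)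
    simp only [hS, Set.mem_setOf_eq, h1, Finset.card_univ, Fintype.card_fin]
    exact hkn
  have hSbdd : BddBelow S := by
    refine ⟨Finset.univ.inf' hne w, ?_⟩
    intro x hx
    have hx' : k ≤ (Finset.univ.filter (fun i => w i ≤ x)).card := hx
    have hcard : 0 < (Finset.univ.filter (fun i => w i ≤ x)).card := lt_of_lt_of_le hk1 hx'
    obtain ⟨i, hi⟩ := Finset.card_pos.mp hcard
    have := (Finset.mem_filter.mp hi).2
    exact le_trans (Finset.inf'_le w (Finset.mem_univ i)) this
  constructor
  · intro ht
    by_contra hcontra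
    push_neg at hcontra
    have hfne : (Finset.univ.filter (fun i => w i < t)).Nonempty :=
      Finset.card_pos.mp (lt_of_lt_of_le hk1 hcontra)
    set x := (Finset.univ.filter (fun i => w i < t)).sup' hfne w with hx
    have hxt : x < t := by
      rw [hx, Finset.sup'_lt_iff]
      intro i hi
      exact (Finset.mem_filter.mp hi).2
    have hxS : x ∈ S := by
      refine le_trans hcontra (Finset.card_le_card ?_)
      intro i hi
      refine Finset.mem_filter.mpr ⟨Finset.mem_univ _, Finset.le_sup' w hi⟩
    exact absurd (lt_of_le_of_lt (le_trans ht (csInf_le hSbdd hxS)) hxt) (lt_irrefl _)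
  · intro h
    apply le_csInf hSne
    intro x hx
    by_contra hlt
    push_neg at hlt
    have hsub : Finset.univ.filter (fun i => w i ≤ x) ⊆ Finset.univ.filter (fun i => w i < t) := by
      intro i hi
      exact Finset.mem_filter.mpr ⟨Finset.mem_univ _, lt_of_le_of_lt (Finset.mem_filter.mp hi).2 hlt⟩
    exact absurd (lt_of_le_of_lt (le_trans hx (Finset.card_le_card hsub)) h) (lt_irrefl _)

lemma lemB {m k : ℕ} (hk : k ≤ m) (v : Fin m → ℝ) :
    k ≤ (Finset.univ.filter (fun j : Fin m =>
      (Finset.univ.filter (fun i => v i < v j)).card < k)).card := by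
  set σ := Tuple.sort v with hσ
  have hmono := Tuple.monotone_sort v
  have hs : (Finset.univ.filter (fun p : Fin m => (p : ℕ) < k))
      = Finset.image (Fin.castLE hk) Finset.univ := by
    ext p
    simp only [Finset.mem_filter, Finset.mem_univ, true_and, Finset.mem_image]
    constructor
    · intro hp
      exact ⟨⟨p, hp⟩, by simp⟩
    · rintro ⟨q, -, rfl⟩
      exact q.isLt
  have hcard : (Finset.univ.filter (fun p : Fin m => (p : ℕ) < k)).card = k := by
    rw [hs, Finset.card_image_of_injective _ (Fin.castLE_injective hk)]
    simp
  have hmain : (Finset.univ.filter (fun p : Fin m => (p : ℕ) < k)).card ≤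
      (Finset.univ.filter (fun j : Fin m =>
        (Finset.univ.filter (fun i => v i < v j)).card < k)).card := by
    apply Finset.card_le_card_of_injOn σ
    · intro p hp
      simp only [Finset.mem_coe, Finset.mem_filter, Finset.mem_univ, true_and] at hp ⊢
      have hre : (Finset.univ.filter (fun i => v i < v (σ p)))
          = Finset.map σ.toEmbedding (Finset.univ.filter (fun q => v (σ q) < v (σ p))) := by
        ext i
        simp only [Finset.mem_filter, Finset.mem_univ, true_and, Finset.mem_map,
          Equiv.coe_toEmbedding]
        constructor
        · intro hi
          exact ⟨σ.symm i, by simpa using hi, by simp⟩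
        · rintro ⟨q, hq, rfl⟩
          exact hq
      rw [hre, Finset.card_map]
      have hsub : (Finset.univ.filter (fun q => v (σ q) < v (σ p)))
          ⊆ Finset.univ.filter (fun q : Fin m => q < p) := by
        intro q hq
        simp only [Finset.mem_filter, Finset.mem_univ, true_and] at hq ⊢
        by_contra hqp
        push_neg at hqp
        exact absurd (lt_of_le_of_lt (hmono hqp) hq) (lt_irrefl _)
      have : (Finset.univ.filter (fun q : Fin m => q < p)).card = (p : ℕ) := by
        have : Finset.univ.filter (fun q : Fin m => q < p) = Finset.Iio p := by
          ext q; simp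
        rw [this, Fin.card_Iio]
      calc (Finset.univ.filter (fun q => v (σ q) < v (σ p))).card
          ≤ (Finset.univ.filter (fun q : Fin m => q < p)).card := Finset.card_le_card hsub
        _ = (p : ℕ) := this
        _ < k := hp
    · exact fun a _ b _ h => σ.injective h
  omega

/-- Split conformal prediction coverage: if `(V₁, ..., V_{n+1})` is exchangeable and
`q̂` is the `⌈(n+1)(1−α)⌉`-th smallest value among `V₁, ..., V_n`, then
`Pr(V_{n+1} ≤ q̂) ≥ 1 − α`. The k-th smallest value is expressed as
`sInf {x | #{i ≤ n : Vᵢ ≤ x} ≥ k}`. -/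
theorem stmt_11 {Ω : Type*} [MeasurableSpace Ω] (P : Measure Ω) [IsProbabilityMeasure P]
    (n : ℕ) (V : Fin (n + 1) → Ω → ℝ) (hV : ∀ i, Measurable (V i))
    (hexch : ∀ σ : Equiv.Perm (Fin (n + 1)),
      P.map (fun ω => fun i => V (σ i) ω) = P.map (fun ω => fun i => V i ω))
    (α : ℝ) (hα0 : 0 < α) (hα1 : α < 1)
    (hk : ⌈((n : ℝ) + 1) * (1 - α)⌉₊ ≤ n)
    (qhat : Ω → ℝ)
    (hqhat : ∀ ω, qhat ω = sInf {x : ℝ |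
      ⌈((n : ℝ) + 1) * (1 - α)⌉₊ ≤
        (Finset.univ.filter (fun i : Fin n => V i.castSucc ω ≤ x)).card}) :
    ENNReal.ofReal (1 - α) ≤ P {ω | V (Fin.last n) ω ≤ qhat ω} := by
  classical
  set k := ⌈((n : ℝ) + 1) * (1 - α)⌉₊ with hkdef
  have hk1 : 1 ≤ k := by
    rw [hkdef, Nat.one_le_ceil_iff]
    have : (0:ℝ) < 1 - α := by linarith
    positivity
  set W : Ω → (Fin (n + 1) → ℝ) := fun ω i => V i ω with hWdef
  have hWm : Measurable W := measurable_pi_lambda _ (fun i => hV i)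
  have hcnt : ∀ j : Fin (n + 1), Measurable (fun v : Fin (n + 1) → ℝ =>
      (Finset.univ.filter (fun i => v i < v j)).card) := by
    intro j
    have h1 : (fun v : Fin (n + 1) → ℝ => (Finset.univ.filter (fun i => v i < v j)).card)
        = fun v => ∑ i : Fin (n + 1), if v i < v j then 1 else 0 := by
      funext v; rw [Finset.card_filter]
    rw [h1]
    apply Finset.measurable_sum
    intro i _
    exact Measurable.ite
      (measurableSet_lt (measurable_pi_apply i) (measurable_pi_apply j))
      measurable_const measurable_const
  set C : Fin (n + 1) → Set (Fin (n + 1) → ℝ) := fun j =>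
    {v | (Finset.univ.filter (fun i => v i < v j)).card < k} with hCdef
  have hCm : ∀ j, MeasurableSet (C j) := fun j => (hcnt j) measurableSet_Iio
  set A : Fin (n + 1) → Set Ω := fun j => W ⁻¹' C j with hAdef
  have hAm : ∀ j, MeasurableSet (A j) := fun j => hWm (hCm j)
  have hAeq : ∀ j, P (A j) = P (A (Fin.last n)) := by
    intro j
    set σ := Equiv.swap j (Fin.last n) with hσ
    set g : (Fin (n + 1) → ℝ) → (Fin (n + 1) → ℝ) := fun v i => v (σ i) with hgdef
    have hgm : Measurable g := measurable_pi_lambda _ (fun i => measurable_pi_apply (σ i))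
    have hpre : g ⁻¹' C (Fin.last n) = C j := by
      ext v
      simp only [hCdef, hgdef, Set.mem_preimage, Set.mem_setOf_eq]
      have hcard : (Finset.univ.filter (fun i => v (σ i) < v (σ (Fin.last n)))).card
          = (Finset.univ.filter (fun i => v i < v (σ (Fin.last n)))).card := by
        apply Finset.card_bij (fun i _ => σ i)
        · intro a ha
          simp only [Finset.mem_filter, Finset.mem_univ, true_and] at ha ⊢
          exact ha
        · intro a _ b _ h
          exact σ.injective h
        · intro b hb
          simp only [Finset.mem_filter, Finset.mem_univ, true_and] at hb
          exact ⟨σ.symm b, by simpa using hb, by simp⟩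
      rw [hcard]
      have : σ (Fin.last n) = j := Equiv.swap_apply_right _ _
      rw [this]
    have hcomp : g ∘ W = fun ω => fun i => V (σ i) ω := rfl
    calc P (A j) = P.map W (C j) := (Measure.map_apply hWm (hCm j)).symm
      _ = P.map W (g ⁻¹' C (Fin.last n)) := by rw [hpre]
      _ = (P.map W).map g (C (Fin.last n)) := (Measure.map_apply hgm (hCm (Fin.last n))).symm
      _ = P.map (g ∘ W) (C (Fin.last n)) := by rw [Measure.map_map hgm hWm]
      _ = P.map W (C (Fin.last n)) := by rw [hcomp, hexch σ]
      _ = P (A (Fin.last n)) := Measure.map_apply hWm (hCm (Fin.last n))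
  have hpt : ∀ ω, (k : ENNReal) ≤ ∑ j : Fin (n + 1), (A j).indicator (fun _ => 1) ω := by
    intro ω
    have hB := lemB (le_trans hk (Nat.le_succ n)) (W ω)
    have hsum : ∑ j : Fin (n + 1), (A j).indicator (fun _ => (1 : ENNReal)) ω
        = ((Finset.univ.filter (fun j : Fin (n + 1) => ω ∈ A j)).card : ENNReal) := by
      simp only [Set.indicator_apply]
      rw [Finset.sum_boole]
    rw [hsum]
    have hmem : (Finset.univ.filter (fun j : Fin (n + 1) => ω ∈ A j))
        = (Finset.univ.filter (fun j : Fin (n + 1) =>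
            (Finset.univ.filter (fun i => W ω i < W ω j)).card < k)) := by
      apply Finset.filter_congr
      intro j _
      simp [hAdef, hCdef]
    rw [hmem]
    exact_mod_cast hB
  have key : ((n : ENNReal) + 1) * P (A (Fin.last n)) ≥ (k : ENNReal) := by
    have step : (k : ENNReal) ≤ ∑ j : Fin (n + 1), P (A j) := by
      calc (k : ENNReal) = ∫⁻ _, (k : ENNReal) ∂P := by simp
        _ ≤ ∫⁻ ω, ∑ j : Fin (n + 1), (A j).indicator (fun _ => 1) ω ∂P :=
            lintegral_mono hpt
        _ = ∑ j : Fin (n + 1), ∫⁻ ω, (A j).indicator (fun _ => 1) ω ∂P :=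
            lintegral_finset_sum _ (fun j _ => measurable_const.indicator (hAm j))
        _ = ∑ j : Fin (n + 1), P (A j) := by
            refine Finset.sum_congr rfl (fun j _ => ?_)
            exact lintegral_indicator_one (hAm j)
    have heq : ∑ j : Fin (n + 1), P (A j) = ((n : ENNReal) + 1) * P (A (Fin.last n)) := by
      rw [Finset.sum_congr rfl (fun j _ => hAeq j), Finset.sum_const, Finset.card_univ,
        Fintype.card_fin, nsmul_eq_mul]
      push_cast
      ring
    rw [← heq]
    exact step
  have hevent : {ω | V (Fin.last n) ω ≤ qhat ω} = A (Fin.last n) := by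
    ext ω
    simp only [Set.mem_setOf_eq, hAdef, hCdef, Set.mem_preimage]
    rw [hqhat ω]
    rw [lemA hk1 hk (fun i : Fin n => V i.castSucc ω) (V (Fin.last n) ω)]
    have hcc : (Finset.univ.filter (fun i : Fin (n + 1) => W ω i < W ω (Fin.last n))).card
        = (Finset.univ.filter (fun i : Fin n => V i.castSucc ω < V (Fin.last n) ω)).card := by
      rw [Finset.card_filter, Finset.card_filter, Fin.sum_univ_castSucc]
      simp [hWdef]
    rw [hcc]
  rw [hevent]
  have hR : ((n : ENNReal) + 1) * ENNReal.ofReal (1 - α) ≤ (k : ENNReal) := by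
    have hle : ((n : ℝ) + 1) * (1 - α) ≤ (k : ℝ) := Nat.le_ceil _
    calc ((n : ENNReal) + 1) * ENNReal.ofReal (1 - α)
        = ENNReal.ofReal (((n : ℝ) + 1) * (1 - α)) := by
          rw [ENNReal.ofReal_mul (by positivity)]
          congr 1
          rw [ENNReal.ofReal_add (by positivity) zero_le_one]
          simp
      _ ≤ ENNReal.ofReal (k : ℝ) := ENNReal.ofReal_le_ofReal hle
      _ = (k : ENNReal) := ENNReal.ofReal_natCast k
  have hNnz : ((n : ENNReal) + 1) ≠ 0 := by simp
  have hNtop : ((n : ENNReal) + 1) ≠ ⊤ := by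
    simp [ENNReal.add_ne_top, ENNReal.natCast_ne_top]
  exact (ENNReal.mul_le_mul_iff_right hNnz hNtop).mp (le_trans hR key)
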